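/- Fix a one-sided matching problem with at least two agent types and at least two house types present. For any allocation μ, there exists a strict preference profile (one strict linear order per agent type over house types) such that μ is not in the strong core with respect to that profile. -/

import Mathlib

/-- Arc of the allocation graph G^big: `(a,b)` is an arc iff `μ a = μE b`. -/
def arcBig {A H : Type*} (μE μ : A → H) (a b : A) : Prop := μ a = μE b

/-- Two agents lie in the same strongly connected component of G^big. -/
def sameSCC {A H : Type*} (μE μ : A → H) (a b : A) : Prop :=
  Relation.ReflTransGen (arcBig μE μ) a b ∧ Relation.ReflTransGen (arcBig μE μ) b a

/-- For each house type, the number of agents allocated it equals the number endowed with it. -/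
def BalancedAlloc {A H : Type*} (μE μ : A → H) : Prop :=
  ∀ h : H, Nat.card {a : A // μ a = h} = Nat.card {a : A // μE a = h}

/-- A directed cycle: a nonempty list of distinct vertices with consecutive arcs,
and an arc from the last vertex back to the first. A single vertex with a
self-loop is a cycle of length 1. -/
def IsCycle {V : Type*} (R : V → V → Prop) (l : List V) : Prop :=
  l ≠ [] ∧ l.Nodup ∧ l.Chain' R ∧ ∀ h : l ≠ [], R (l.getLast h) (l.head h)

/-- A blocking coalition: a nonempty coalition `C` and a reallocation `μ'` of its
own endowments (as multisets) making every member weakly better off and at least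
one member strictly better off, w.r.t. the strict type-preference profile `P`. -/
def Blocking {A H T : Type*} (tp : A → T) (μE μ : A → H)
    (P : T → LinearOrder H) : Prop :=
  ∃ (C : Finset A) (μ' : A → H),
    C.Nonempty ∧
    C.val.map μ' = C.val.map μE ∧
    (∀ a ∈ C, (P (tp a)).le (μ a) (μ' a)) ∧
    (∃ a ∈ C, (P (tp a)).lt (μ a) (μ' a))

/-- The allocation `μ` is rationalizable: some strict type-preference profile places
it in the strong core (no blocking coalition). -/
def Rationalizable {A H T : Type*} (tp : A → T) (μE μ : A → H) : Prop :=
  ∃ P : T → LinearOrder H, ¬ Blocking tp μE μ P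

section TopOrd

variable {H : Type*} [Fintype H]

open Classical

/-- An auxiliary injection used to build linear orders with a prescribed top element. -/
noncomputable def topOrdFun (h0 : H) : H → Lex (ℕ × ℕ) :=
  fun x => toLex ((if x = h0 then 1 else 0), (Fintype.equivFin H x : ℕ))

lemma topOrdFun_inj (h0 : H) : Function.Injective (topOrdFun h0) := by
  intro x y h
  have h2 : ((Fintype.equivFin H x : ℕ)) = ((Fintype.equivFin H y : ℕ)) := by
    have := congrArg (fun z => (ofLex z).2) h
    simpa [topOrdFun] using this
  exact (Fintype.equivFin H).injective (Fin.val_injective h2)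

/-- A linear order on `H` in which `h0` is the top element. -/
noncomputable def topOrd (h0 : H) : LinearOrder H :=
  LinearOrder.lift' (topOrdFun h0) (topOrdFun_inj h0)

lemma topOrd_le (h0 x : H) : (topOrd h0).le x h0 := by
  show topOrdFun h0 x ≤ topOrdFun h0 h0
  rcases eq_or_ne x h0 with rfl | hx
  · exact le_refl _
  · apply le_of_lt
    show topOrdFun h0 x < topOrdFun h0 h0
    unfold topOrdFun
    rw [Prod.Lex.lt_iff]
    left
    simp [hx]

lemma topOrd_lt (h0 x : H) (hx : x ≠ h0) : (topOrd h0).lt x h0 := by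
  letI := topOrd h0
  exact lt_of_le_of_ne (topOrd_le h0 x) hx

end TopOrd

lemma exists_pair {A H T : Type*} (tp : A → T) (μE : A → H)
    (htypes : ∃ a b : A, tp a ≠ tp b)
    (hhouses : ∃ a b : A, μE a ≠ μE b) :
    ∃ a b : A, tp a ≠ tp b ∧ μE a ≠ μE b := by
  obtain ⟨a, b, hab⟩ := htypes
  obtain ⟨c, d, hcd⟩ := hhouses
  by_cases h : μE a = μE b
  · -- one of c, d has endowment different from μE a
    rcases ne_or_eq (μE c) (μE a) with hc | hc
    · rcases ne_or_eq (tp c) (tp a) with ht | ht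
      · exact ⟨c, a, ht, hc⟩
      · exact ⟨c, b, ht ▸ hab, h ▸ hc⟩
    · have hd : μE d ≠ μE a := fun hd => hcd (hc.trans hd.symm)
      rcases ne_or_eq (tp d) (tp a) with ht | ht
      · exact ⟨d, a, ht, hd⟩
      · exact ⟨d, b, ht ▸ hab, h ▸ hd⟩
  · exact ⟨a, b, hab, h⟩

/-- with at least two agent types present and at least two house types
present among endowments, for any allocation there is a strict type-preference
profile under which the allocation is not in the strong core. -/
theorem stmt5 {A H T : Type*} [Fintype A] [Fintype H] (tp : A → T)
    (μE μ : A → H) (hbal : BalancedAlloc μE μ)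
    (htypes : ∃ a b : A, tp a ≠ tp b)
    (hhouses : ∃ a b : A, μE a ≠ μE b) :
    ∃ P : T → LinearOrder H, Blocking tp μE μ P := by
  classical
  obtain ⟨a, b, htab, heab⟩ := exists_pair tp μE htypes hhouses
  have hab : a ≠ b := fun h => htab (congrArg tp h)
  by_cases hfix : μ a = μE b ∧ μ b = μE a
  · -- singleton blocking by a: it wants its own endowment back
    refine ⟨fun _ => topOrd (μE a), ?_⟩
    refine ⟨{a}, μE, ⟨a, Finset.mem_singleton_self a⟩, rfl, ?_, ?_⟩
    · intro x hx
      rw [Finset.mem_singleton.mp hx]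
      exact topOrd_le _ _
    · refine ⟨a, Finset.mem_singleton_self a, ?_⟩
      exact topOrd_lt _ _ (by rw [hfix.1]; exact heab.symm)
  · -- swap between a and b
    refine ⟨fun t => if t = tp a then topOrd (μE b) else topOrd (μE a), ?_⟩
    refine ⟨{a, b}, fun x => if x = a then μE b else μE a, ⟨a, by simp⟩, ?_, ?_, ?_⟩
    · have hval : ({a, b} : Finset A).val = (a ::ₘ {b}) := by
        rw [Finset.insert_val, Multiset.ndinsert_of_notMem (by simp [hab])]
        rfl
      rw [hval]
      simp only [Multiset.map_cons, Multiset.map_singleton, if_pos rfl, if_neg hab.symm]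
      exact Multiset.cons_swap _ _ _
    · intro x hx
      rcases Finset.mem_insert.mp hx with rfl | hx
      · simp only [if_pos rfl]
        beta_reduce
        rw [if_pos rfl]
        exact topOrd_le _ _
      · have hx : x = b := Finset.mem_singleton.mp hx
        subst hx
        simp only [if_neg htab.symm, if_neg hab.symm]
        beta_reduce
        rw [if_neg htab.symm]
        exact topOrd_le _ _
    · rcases not_and_or.mp hfix with h1 | h1
      · refine ⟨a, by simp, ?_⟩
        simp only [if_pos rfl]
        beta_reduce
        rw [if_pos rfl]
        exact topOrd_lt _ _ h1
      · refine ⟨b, by simp, ?_⟩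
        simp only [if_neg htab.symm, if_neg hab.symm]
        beta_reduce
        rw [if_neg htab.symm]
        exact topOrd_lt _ _ h1
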